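/- (Overlap preservation.) Let (Ω, 𝓕, μ) be a probability space, T_rct, T_synth : Ω → Bool measurable, with T_rct independent of T_synth under μ and μ({ω | T_rct ω = true}) = 1/2. Let A = {ω | T_rct ω = T_synth ω} and let ε > 0 satisfy ε ≤ μ({ω | T_synth ω = true}) ≤ 1 − ε. Then the accepted population retains overlap: ε ≤ (ProbabilityTheory.cond μ A) ({ω | T_synth ω = true}) ≤ 1 − ε. -/

import Mathlib

open MeasureTheory ProbabilityTheory
open scoped ENNReal

theorem overlap_preservation {Ω : Type*} [MeasurableSpace Ω]
    (μ : Measure Ω) [IsProbabilityMeasure μ]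
    (Trct Tsynth : Ω → Bool)
    (hTrct : Measurable Trct) (hTsynth : Measurable Tsynth)
    (hindep : IndepFun Trct Tsynth μ)
    (hbal : μ {ω | Trct ω = true} = 1/2)
    (ε : ℝ≥0∞) (hε : 0 < ε)
    (hlow : ε ≤ μ {ω | Tsynth ω = true})
    (hhigh : μ {ω | Tsynth ω = true} ≤ 1 - ε) :
    ε ≤ (ProbabilityTheory.cond μ {ω | Trct ω = Tsynth ω}) {ω | Tsynth ω = true}
      ∧ (ProbabilityTheory.cond μ {ω | Trct ω = Tsynth ω}) {ω | Tsynth ω = true} ≤ 1 - ε := by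
  set p := μ {ω | Tsynth ω = true} with hp
  have hA : MeasurableSet {ω | Trct ω = Tsynth ω} :=
    measurableSet_eq_fun hTrct hTsynth
  have hmul := hindep.measure_inter_preimage_eq_mul
  have hTrctF : μ (Trct ⁻¹' {false}) = 1/2 := by
    have hc : Trct ⁻¹' {false} = {ω | Trct ω = true}ᶜ := by
      ext ω
      simp only [Set.mem_preimage, Set.mem_singleton_iff, Set.mem_compl_iff,
        Set.mem_setOf_eq, Bool.not_eq_true]
    rw [hc]
    rw [measure_compl (s := {ω | Trct ω = true}) (hTrct (measurableSet_singleton true)) (measure_ne_top μ _),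
      measure_univ, hbal]
    exact ENNReal.sub_half ENNReal.one_ne_top
  have hTsF : μ (Tsynth ⁻¹' {false}) = 1 - p := by
    have hc : Tsynth ⁻¹' {false} = {ω | Tsynth ω = true}ᶜ := by
      ext ω
      simp only [Set.mem_preimage, Set.mem_singleton_iff, Set.mem_compl_iff,
        Set.mem_setOf_eq, Bool.not_eq_true]
    rw [hc]
    rw [measure_compl (s := {ω | Tsynth ω = true}) (hTsynth (measurableSet_singleton true)) (measure_ne_top μ _),
      measure_univ]
  have hTT : μ (Trct ⁻¹' {true} ∩ Tsynth ⁻¹' {true}) = (1/2) * p := by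
    rw [hmul {true} {true} (measurableSet_singleton _) (measurableSet_singleton _)]
    congr 1
  have hFF : μ (Trct ⁻¹' {false} ∩ Tsynth ⁻¹' {false}) = (1/2) * (1 - p) := by
    rw [hmul {false} {false} (measurableSet_singleton _) (measurableSet_singleton _),
      hTrctF, hTsF]
  have hAdecomp : {ω | Trct ω = Tsynth ω} =
      (Trct ⁻¹' {true} ∩ Tsynth ⁻¹' {true}) ∪ (Trct ⁻¹' {false} ∩ Tsynth ⁻¹' {false}) := by
    ext ω
    cases h1 : Trct ω <;> cases h2 : Tsynth ω <;> simp [h1, h2]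
  have hp1 : p ≤ 1 := prob_le_one
  have hpne : p ≠ ⊤ := (lt_of_le_of_lt hp1 (by norm_num)).ne
  have hμA : μ {ω | Trct ω = Tsynth ω} = 1/2 := by
    rw [hAdecomp, measure_union _ ((hTrct (measurableSet_singleton _)).inter
      (hTsynth (measurableSet_singleton _))), hTT, hFF]
    · rw [← mul_add, add_comm, tsub_add_cancel_of_le hp1, mul_one]
    · apply Set.disjoint_left.mpr
      rintro ω ⟨h1, -⟩ ⟨h2, -⟩
      simp [Set.mem_preimage] at h1 h2
      rw [h1] at h2; exact Bool.noConfusion h2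
  have hAint : {ω | Trct ω = Tsynth ω} ∩ {ω | Tsynth ω = true} =
      Trct ⁻¹' {true} ∩ Tsynth ⁻¹' {true} := by
    ext ω
    constructor
    · rintro ⟨h1, h2⟩
      simp only [Set.mem_setOf_eq] at h1 h2
      exact ⟨by simp [h1, h2], by simp [h2]⟩
    · rintro ⟨h1, h2⟩
      simp only [Set.mem_preimage, Set.mem_singleton_iff] at h1 h2
      exact ⟨by simp [h1, h2], h2⟩
  have hcond : (ProbabilityTheory.cond μ {ω | Trct ω = Tsynth ω}) {ω | Tsynth ω = true} = p := by
    rw [cond_apply hA, hAint, hTT, hμA]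
    rw [← mul_assoc]
    rw [ENNReal.inv_mul_cancel (by norm_num) (by norm_num), one_mul]
  rw [hcond]
  exact ⟨hlow, hhigh⟩
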